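/- Let D be the Dirac operator of a Spin^c surface and suppose φ is a spinor field satisfying ∇_X φ = −(1/2) E X • φ + (iτ/2) X • φ̄ for all tangent vectors X, where E is a field of symmetric endomorphisms with trace 2H. Then D φ = H φ − i τ φ̄ and |φ| is constant. -/

import Mathlib

/-- on a Spin^c surface, if `∇_X φ = −(1/2) EX•φ + (iτ/2) X•φ̄` with `E`
symmetric of trace `2H`, then `Dφ = Hφ − iτφ̄` and `|φ|` is constant
(i.e. `X(|φ|²) = 2 Re⟨∇_X φ, φ⟩ = 0` for all `X`).  Pointwise algebraic model: `V` is the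
tangent space with orthonormal frame `e₀, e₁`, `cl` the Clifford multiplication on the
spinor module `S`, and `φ̄ = i e₀•e₁•φ`. -/
theorem stmt_13
    {S : Type*} [NormedAddCommGroup S] [InnerProductSpace ℂ S]
    {V : Type*} [AddCommGroup V] [Module ℝ V]
    (g : V →ₗ[ℝ] V →ₗ[ℝ] ℝ)
    (e : Fin 2 → V)
    (horth : ∀ i j, g (e i) (e j) = if i = j then 1 else 0)
    (hbasis : ∀ v : V, v = g v (e 0) • e 0 + g v (e 1) • e 1)
    (cl : V →ₗ[ℝ] S →ₗ[ℂ] S)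
    (hclif : ∀ (X Y : V) (ψ : S), cl X (cl Y ψ) + cl Y (cl X ψ) = (-2 * g X Y) • ψ)
    (hskew : ∀ (X : V) (ψ χ : S), (inner ℂ (cl X ψ) χ : ℂ) = -(inner ℂ ψ (cl X χ) : ℂ))
    (nabla : V → S →ₗ[ℝ] S)
    (E : V →ₗ[ℝ] V) (hEsym : ∀ X Y : V, g (E X) Y = g X (E Y))
    (H τ : ℝ)
    (htrace : g (E (e 0)) (e 0) + g (E (e 1)) (e 1) = 2 * H)
    (conjS : S → S)
    (hconjS : ∀ ψ, conjS ψ = Complex.I • cl (e 0) (cl (e 1) ψ))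
    (φ : S)
    (hspinor : ∀ X : V, nabla X φ =
      (-(1 / 2 : ℝ)) • cl (E X) φ + ((Complex.I * (τ : ℂ)) / 2) • cl X (conjS φ)) :
    (∑ i, cl (e i) (nabla (e i) φ)) = H • φ - (Complex.I * (τ : ℂ)) • conjS φ ∧
    ∀ X : V, (inner ℂ (nabla X φ) φ : ℂ).re = 0 := by

  -- orthonormality facts
  have g00 : g (e 0) (e 0) = 1 := by simpa using horth 0 0
  have g01 : g (e 0) (e 1) = 0 := by simpa using horth 0 1
  have g10 : g (e 1) (e 0) = 0 := by simpa using horth 1 0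
  have g11 : g (e 1) (e 1) = 1 := by simpa using horth 1 1
  -- e i squares to -1
  have hsq : ∀ (i : Fin 2) (ψ : S), cl (e i) (cl (e i) ψ) = -ψ := by
    intro i ψ
    have h := hclif (e i) (e i) ψ
    rw [horth] at h
    simp only [if_pos rfl] at h
    norm_num at h
    have h2 : (2 : ℝ) • cl (e i) (cl (e i) ψ) = (2 : ℝ) • (-ψ) := by
      rw [two_smul, h]; module
    exact smul_right_injective S (by norm_num) h2
  -- anticommutation
  have hanti : ∀ ψ : S, cl (e 1) (cl (e 0) ψ) = - cl (e 0) (cl (e 1) ψ) := by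
    intro ψ
    have h := hclif (e 0) (e 1) ψ
    rw [g01] at h
    simp only [mul_zero, zero_smul] at h
    have h' : cl (e 1) (cl (e 0) ψ) + cl (e 0) (cl (e 1) ψ) = 0 := by
      rw [add_comm]; exact h
    exact eq_neg_of_add_eq_zero_left h'
  -- purely imaginary inner products
  have hpure : ∀ (Y : V) (ψ : S), (inner ℂ (cl Y ψ) ψ : ℂ).re = 0 := by
    intro Y ψ
    have h := hskew Y ψ ψ
    have h2 : (inner ℂ ψ (cl Y ψ) : ℂ) = starRingEnd ℂ (inner ℂ (cl Y ψ) ψ : ℂ) :=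
      (inner_conj_symm _ _).symm
    rw [h2] at h
    have h3 := congrArg Complex.re h
    rw [Complex.neg_re, Complex.conj_re] at h3
    linarith
  -- expansion of cl (E (e i)) φ
  have hE0 : cl (E (e 0)) φ = g (E (e 0)) (e 0) • cl (e 0) φ + g (E (e 0)) (e 1) • cl (e 1) φ := by
    conv_lhs => rw [hbasis (E (e 0))]
    simp [map_add, map_smul]
  have hE1 : cl (E (e 1)) φ = g (E (e 1)) (e 0) • cl (e 0) φ + g (E (e 1)) (e 1) • cl (e 1) φ := by
    conv_lhs => rw [hbasis (E (e 1))]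
    simp [map_add, map_smul]
  -- symmetry : off-diagonal entries agree
  have hsymE : g (E (e 0)) (e 1) = g (E (e 1)) (e 0) := by
    have h := hEsym (e 0) (e 1)
    have : g (e 0) (E (e 1)) = g (E (e 1)) (e 0) := by
      conv_lhs => rw [hbasis (E (e 1))]
      simp [g00, g01]
    rw [this] at h
    exact h
  -- key reduction of cl X (cl e0 (cl e1 ψ)) to a single Clifford multiplication
  have hred : ∀ (X : V) (ψ : S),
      cl X (cl (e 0) (cl (e 1) ψ)) = cl (g X (e 1) • e 0 - g X (e 0) • e 1) ψ := by
    intro X ψ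
    conv_lhs => rw [hbasis X]
    have h1 : cl (e 0) (cl (e 0) (cl (e 1) ψ)) = - cl (e 1) ψ := hsq 0 _
    have h2 : cl (e 1) (cl (e 0) (cl (e 1) ψ)) = cl (e 0) ψ := by
      rw [hanti (cl (e 1) ψ), hsq 1 ψ, map_neg, neg_neg]
    simp only [map_add, map_smul, LinearMap.add_apply, LinearMap.smul_apply, map_sub,
      LinearMap.sub_apply, h1, h2]
    module
  constructor
  · rw [Fin.sum_univ_two, hspinor (e 0), hspinor (e 1), hconjS φ]
    have hs0 : ∀ ψ : S, cl (e 0) (cl (e 0) ψ) = -ψ := hsq 0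
    have hs1 : ∀ ψ : S, cl (e 1) (cl (e 1) ψ) = -ψ := hsq 1
    simp only [map_add, LinearMap.map_smul_of_tower, map_smul, hE0, hE1, hs0, hs1, hanti,
      map_neg, smul_neg]
    rw [hsymE]
    have hT : g (E (e 1)) (e 1) = 2 * H - g (E (e 0)) (e 0) := by linarith
    rw [hT]
    match_scalars <;> simp [Complex.ext_iff] <;> ring
  · intro X
    rw [hspinor X]
    rw [hconjS φ, map_smul, hred X φ]
    set Y := g X (e 1) • e 0 - g X (e 0) • e 1 with hY
    have h1 := hpure (E X) φ
    have h2 := hpure Y φ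
    rw [smul_smul]
    have hc : Complex.I * (τ : ℂ) / 2 * Complex.I = ((-(τ/2) : ℝ) : ℂ) := by
      simp [Complex.ext_iff]
    rw [hc, inner_add_left, ← Complex.coe_smul, inner_smul_left, inner_smul_left,
        Complex.conj_ofReal, Complex.conj_ofReal]
    simp only [Complex.add_re, Complex.mul_re, Complex.ofReal_re, Complex.ofReal_im, h1, h2]
    ring
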